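/- Second step of the singular-part recursion, case 2: assume A = Φ * Ψ in AddMonoidAlgebra ℝ ℝ with data as in the context and N ≥ 2, L ≥ 2, K ≥ 2. If β₂ = ζ₁ + κ₂ but α₂ ≠ φ₁·ψ₂, then β₂ = ζ₂ + κ₁ as well and α₂ = φ₁·ψ₂ + φ₂·ψ₁; equivalently, ζ₂ = β₂ − κ₁ and φ₂ = (α₂ − φ₁ψ₂)/ψ₁. -/

import Mathlib

/-- Second step of the singular-part recursion, case 2: if `A = Φ * Ψ` with the
leaf-peeling singular data, `β₂ = ζ₁ + κ₂` but `α₂ ≠ φ₁·ψ₂`, then also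
`β₂ = ζ₂ + κ₁` and `α₂ = φ₁·ψ₂ + φ₂·ψ₁`; equivalently, `ζ₂ = β₂ − κ₁` and
`φ₂ = (α₂ − φ₁ψ₂)/ψ₁`. -/
theorem singular_recursion_second_step_case2
    (N L K : ℕ) (hN : 2 ≤ N) (hL : 2 ≤ L) (hK : 2 ≤ K)
    (β : Fin N → ℝ) (ζ : Fin L → ℝ) (κ : Fin K → ℝ)
    (hβ : StrictMono β) (hζ : StrictMono ζ) (hκ : StrictMono κ)
    (α : Fin N → ℝ) (φ : Fin L → ℝ) (ψ : Fin K → ℝ)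
    (hα : ∀ n, α n ≠ 0) (hφ : ∀ l, 0 < φ l) (hψ : ∀ k, 0 < ψ k)
    (A Φ Ψ : AddMonoidAlgebra ℝ ℝ)
    (hA : A = ∑ n, AddMonoidAlgebra.single (β n) (α n))
    (hΦ : Φ = ∑ l, AddMonoidAlgebra.single (ζ l) (φ l))
    (hΨ : Ψ = ∑ k, AddMonoidAlgebra.single (κ k) (ψ k))
    (hSing : A = Φ * Ψ)
    (hcase : β ⟨1, hN⟩ = ζ ⟨0, by omega⟩ + κ ⟨1, hK⟩)
    (hcase' : α ⟨1, hN⟩ ≠ φ ⟨0, by omega⟩ * ψ ⟨1, hK⟩) :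
    β ⟨1, hN⟩ = ζ ⟨1, hL⟩ + κ ⟨0, by omega⟩ ∧
      α ⟨1, hN⟩ = φ ⟨0, by omega⟩ * ψ ⟨1, hK⟩ + φ ⟨1, hL⟩ * ψ ⟨0, by omega⟩ ∧
      ζ ⟨1, hL⟩ = β ⟨1, hN⟩ - κ ⟨0, by omega⟩ ∧
      φ ⟨1, hL⟩ = (α ⟨1, hN⟩ - φ ⟨0, by omega⟩ * ψ ⟨1, hK⟩) / ψ ⟨0, by omega⟩ := by
  classical
  have hL0 : 0 < L := by omega
  have hK0 : 0 < K := by omega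
  have hN0 : 0 < N := by omega
  -- pointwise coefficient identity
  have key : ∀ x : ℝ,
      (∑ n, if β n = x then α n else 0)
        = ∑ p : Fin L × Fin K, if ζ p.1 + κ p.2 = x then φ p.1 * ψ p.2 else 0 := by
    intro x
    have h := congrArg (fun f : AddMonoidAlgebra ℝ ℝ => f.coeff x) hSing
    rw [hA, hΦ, hΨ] at h
    rw [AddMonoidAlgebra.coeff_sum, Finsupp.finset_sum_apply] at h
    simp only [AddMonoidAlgebra.coeff_single, Finsupp.single_apply] at h
    rw [h, Finset.sum_mul_sum]
    simp only [AddMonoidAlgebra.single_mul_single]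
    rw [← Finset.sum_product']
    rw [AddMonoidAlgebra.coeff_sum, Finsupp.finset_sum_apply]
    simp only [AddMonoidAlgebra.coeff_single, Finsupp.single_apply]
    exact Finset.sum_congr rfl fun p _ => by split <;> simp_all
  have evalβ : ∀ m : Fin N, (∑ n, if β n = β m then α n else 0) = α m := by
    intro m
    rw [Finset.sum_eq_single m]
    · simp
    · intro n _ hn
      exact if_neg (hβ.injective.ne hn)
    · simp
  -- every point ζ l + κ k is in the support of A
  have exists_n : ∀ (l : Fin L) (k : Fin K), ∃ n, β n = ζ l + κ k := by
    intro l k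
    by_contra hcon
    push_neg at hcon
    have h0 := key (ζ l + κ k)
    rw [Finset.sum_eq_zero (fun n _ => if_neg (hcon n))] at h0
    have hpos : 0 < ∑ p : Fin L × Fin K,
        if ζ p.1 + κ p.2 = ζ l + κ k then φ p.1 * ψ p.2 else 0 := by
      apply Finset.sum_pos'
      · intro p _
        split
        · exact le_of_lt (mul_pos (hφ _) (hψ _))
        · exact le_refl 0
      · exact ⟨(l, k), Finset.mem_univ _, by simp [mul_pos (hφ l) (hψ k)]⟩
    exact absurd h0.symm (ne_of_gt hpos)
  -- every β n is a sum ζ l + κ k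
  have exists_p : ∀ n : Fin N, ∃ (l : Fin L) (k : Fin K), ζ l + κ k = β n := by
    intro n
    by_contra hcon
    push_neg at hcon
    have h0 := key (β n)
    rw [evalβ n, Finset.sum_eq_zero (fun p _ => if_neg (hcon p.1 p.2))] at h0
    exact hα n h0
  -- β 0 ≤ ζ 0 + κ 0
  have hβ0 : β ⟨0, hN0⟩ ≤ ζ ⟨0, hL0⟩ + κ ⟨0, hK0⟩ := by
    obtain ⟨n, hn⟩ := exists_n ⟨0, hL0⟩ ⟨0, hK0⟩
    rw [← hn]
    exact hβ.monotone (Fin.le_def.mpr (Nat.zero_le _))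
  have hζ01 : ζ ⟨0, hL0⟩ < ζ ⟨1, hL⟩ := hζ (Fin.mk_lt_mk.mpr one_pos)
  -- classification of pairs summing to β₂
  have classA : ∀ (l : Fin L) (k : Fin K), ζ l + κ k = β ⟨1, hN⟩ →
      (l = ⟨0, hL0⟩ ∧ k = ⟨1, hK⟩) ∨ (k = ⟨0, hK0⟩ ∧ 1 ≤ l.val) := by
    intro l k hlk
    rcases Nat.eq_zero_or_pos l.val with h | h
    · left
      have hl : l = ⟨0, hL0⟩ := Fin.ext h
      refine ⟨hl, hκ.injective ?_⟩
      rw [hl] at hlk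
      rw [hcase] at hlk
      linarith
    · right
      refine ⟨?_, h⟩
      by_contra hk
      have hk1 : 1 ≤ k.val := Nat.pos_of_ne_zero (fun h' => hk (Fin.ext h'))
      have h1 : ζ ⟨1, hL⟩ ≤ ζ l := hζ.monotone (Fin.le_def.mpr h)
      have h2 : κ ⟨1, hK⟩ ≤ κ k := hκ.monotone (Fin.le_def.mpr hk1)
      rw [hcase] at hlk
      linarith
  -- there is a pair of the second kind
  have hexists : ∃ l : Fin L, 1 ≤ l.val ∧ ζ l + κ ⟨0, hK0⟩ = β ⟨1, hN⟩ := by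
    by_contra hcon
    push_neg at hcon
    have hall : ∀ p : Fin L × Fin K,
        (ζ p.1 + κ p.2 = β ⟨1, hN⟩) ↔ p = ((⟨0, hL0⟩ : Fin L), (⟨1, hK⟩ : Fin K)) := by
      intro p
      constructor
      · intro hp
        rcases classA p.1 p.2 hp with ⟨h1, h2⟩ | ⟨h1, h2⟩
        · exact Prod.ext h1 h2
        · rw [h1] at hp
          exact absurd hp (hcon p.1 h2)
      · rintro rfl
        exact hcase.symm
    have h0 := key (β ⟨1, hN⟩)
    rw [evalβ] at h0
    rw [Finset.sum_congr rfl (fun p _ => if_congr (hall p) rfl rfl)] at h0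
    rw [Finset.sum_ite_eq' Finset.univ ((⟨0, hL0⟩ : Fin L), (⟨1, hK⟩ : Fin K))
      (fun p => φ p.1 * ψ p.2)] at h0
    simp at h0
    exact hcase' h0
  obtain ⟨l, hl1, hlsum⟩ := hexists
  -- β₂ = ζ₁ + κ₀
  have hζ1κ0 : β ⟨1, hN⟩ = ζ ⟨1, hL⟩ + κ ⟨0, hK0⟩ := by
    obtain ⟨m, hm⟩ := exists_n ⟨1, hL⟩ ⟨0, hK0⟩
    have hub : β m ≤ β ⟨1, hN⟩ := by
      rw [hm, ← hlsum]
      have := hζ.monotone (show (⟨1, hL⟩ : Fin L) ≤ l from Fin.le_def.mpr hl1)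
      linarith
    have hlb : β ⟨0, hN0⟩ < β m := by
      rw [hm]
      linarith
    have hm1 : m = ⟨1, hN⟩ := by
      have h1 : 0 < m.val := hβ.lt_iff_lt.mp hlb
      have h2 : m.val ≤ 1 := hβ.le_iff_le.mp hub
      apply Fin.ext
      show m.val = 1
      omega
    rw [← hm1, hm]
  -- full classification
  have classD : ∀ p : Fin L × Fin K, (ζ p.1 + κ p.2 = β ⟨1, hN⟩) ↔
      (p = ((⟨0, hL0⟩ : Fin L), (⟨1, hK⟩ : Fin K)) ∨
        p = ((⟨1, hL⟩ : Fin L), (⟨0, hK0⟩ : Fin K))) := by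
    intro p
    constructor
    · intro hp
      rcases classA p.1 p.2 hp with ⟨h1, h2⟩ | ⟨h1, h2⟩
      · exact Or.inl (Prod.ext h1 h2)
      · right
        rw [h1] at hp
        have hps : ζ p.1 = ζ ⟨1, hL⟩ := by linarith [hζ1κ0]
        exact Prod.ext (hζ.injective hps) h1
    · rintro (rfl | rfl)
      · exact hcase.symm
      · exact hζ1κ0.symm
  -- evaluate the coefficient at β₂
  have hab : ((⟨0, hL0⟩ : Fin L), (⟨1, hK⟩ : Fin K)) ≠
      ((⟨1, hL⟩ : Fin L), (⟨0, hK0⟩ : Fin K)) := by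
    simp [Prod.ext_iff, Fin.ext_iff]
  have hα2 : α ⟨1, hN⟩ = φ ⟨0, hL0⟩ * ψ ⟨1, hK⟩ + φ ⟨1, hL⟩ * ψ ⟨0, hK0⟩ := by
    have h0 := key (β ⟨1, hN⟩)
    rw [evalβ] at h0
    rw [Finset.sum_congr rfl (fun p _ => if_congr (classD p) rfl rfl)] at h0
    rw [← Finset.sum_filter] at h0
    have hfe : Finset.univ.filter (fun p : Fin L × Fin K =>
        p = ((⟨0, hL0⟩ : Fin L), (⟨1, hK⟩ : Fin K)) ∨
          p = ((⟨1, hL⟩ : Fin L), (⟨0, hK0⟩ : Fin K))) =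
        {((⟨0, hL0⟩ : Fin L), (⟨1, hK⟩ : Fin K)),
          ((⟨1, hL⟩ : Fin L), (⟨0, hK0⟩ : Fin K))} := by
      ext p
      simp
    rw [hfe, Finset.sum_pair hab] at h0
    exact h0
  have hψ0 : ψ ⟨0, hK0⟩ ≠ 0 := ne_of_gt (hψ _)
  refine ⟨hζ1κ0, hα2, by linarith [hζ1κ0], ?_⟩
  rw [hα2]
  field_simp
  ring
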